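/- Fix t ∈ [0,1), n with 2^N ≤ n < 2^{N+1}, and m = ∑_{i=0}^{N−1} t_{i+1} 2^i. Then L_n^{(t)} ≤ 2V(m) + |T(n,m)| + 2, where T(n,m) = {i : 1 ≤ i ≤ N−1, n_i ≠ n_{i−1}, m_i = m_{i−1}} and V is the binary variation. -/

import Mathlib

open MeasureTheory Finset

noncomputable section

/-- The dyadic group: countable product of ℤ/2. -/
abbrev G := ℕ → ZMod 2

/-- Binary digits of a real number, as an element of the dyadic group. -/
def toG (x : ℝ) : G := fun n => ((⌊x * 2 ^ (n + 1)⌋ : ℤ) : ZMod 2)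

/-- Haar (product) measure on the dyadic group, realized as the pushforward
of Lebesgue measure on `[0,1)` under the binary digit map. -/
def muG : Measure G := (volume.restrict (Set.Ico (0:ℝ) 1)).map toG

/-- Walsh–Paley functions. -/
def walsh (m : ℕ) (x : G) : ℝ :=
  ∏ k ∈ Finset.range m, if m.testBit k then (-1 : ℝ) ^ ((x k).val) else 1

/-- Walsh–Dirichlet kernel. -/
def Dir (n : ℕ) (x : G) : ℝ := ∑ k ∈ Finset.range n, walsh k x

/-- Dyadic interval `I_n` of rank `n` about `0`. -/
def Iset (n : ℕ) : Set G := {x | ∀ i < n, x i = 0}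

/-- `k`-th binary digit of `n`, as a natural number. -/
def bit (n k : ℕ) : ℕ := (n.testBit k).toNat

/-- `α_i(n) = |∑_{k<i} n_k 2^k − n_i 2^i|`. -/
def alpha (n i : ℕ) : ℤ :=
  |(∑ k ∈ Finset.range i, (bit n k : ℤ) * 2 ^ k) - (bit n i : ℤ) * 2 ^ i|

/-- Binary variation `V(n) = n_0 + ∑_{k≥1} |n_k − n_{k−1}|`. -/
def V (n : ℕ) : ℕ :=
  bit n 0 + ∑ k ∈ Finset.range n, if n.testBit (k+1) ≠ n.testBit k then 1 else 0

/-- `A(n)`: indices where consecutive binary digits differ (with `n_{−1} = 0`). -/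
def Aset (n : ℕ) : Finset ℕ :=
  (Finset.range (n+1)).filter
    (fun i => if i = 0 then n.testBit 0 else n.testBit i ≠ n.testBit (i-1))

/-- `S(n) = ∑_{i ∈ A(n)} α_i(n)/2^{i+1}`. -/
def S (n : ℕ) : ℝ := ∑ i ∈ Aset n, (alpha n i : ℝ) / 2 ^ (i+1)

/-- `j`-th binary digit of a real number `t ∈ [0,1)`. -/
def tdig (t : ℝ) (j : ℕ) : ℕ := (⌊t * 2 ^ (j+1)⌋ % 2).toNat

/-- `m = ∑_{i=0}^{N-1} t_{i+1} 2^i`. -/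
def mOf (t : ℝ) (N : ℕ) : ℕ := ∑ i ∈ Finset.range N, tdig t (i+1) * 2 ^ i

/-- Conjugate Walsh–Dirichlet kernel
`D̃_n^{(t)} = D_n − 2 w_m D_m − 2 t_{N+1}(D_n − D_{2^N})` where `m = mOf t N`. -/
def Dconj (t : ℝ) (N n : ℕ) (x : G) : ℝ :=
  Dir n x - 2 * walsh (mOf t N) x * Dir (mOf t N) x
    - 2 * (tdig t (N+1) : ℝ) * (Dir n x - Dir (2^N) x)

/-- Lebesgue constant of the conjugate transform. -/
def Leb (t : ℝ) (N n : ℕ) : ℝ := ∫ x, |Dconj t N n x| ∂muG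

/-- `T(a,b) = {i : 1 ≤ i ≤ N−1, a_i ≠ a_{i−1}, b_i = b_{i−1}}`. -/
def Tset (N a b : ℕ) : Finset ℕ :=
  (Finset.Icc 1 (N-1)).filter
    (fun i => a.testBit i ≠ a.testBit (i-1) ∧ b.testBit i = b.testBit (i-1))

section Aux

-- my defs
def dlt (c j : ℕ) : ℕ :=
  if j = 0 then bit c 0 else if c.testBit j ≠ c.testBit (j-1) then 1 else 0

def Rho (s L k : ℕ) (x : G) : ℝ := ∏ i ∈ Finset.Ico (s+1) L, (-1:ℝ)^(bit k i * (x i).val)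

lemma bit_le_one (k s : ℕ) : bit k s ≤ 1 := by
  unfold bit; cases k.testBit s <;> simp

lemma dlt_le_one (c j : ℕ) : dlt c j ≤ 1 := by
  unfold dlt; split
  · exact bit_le_one c 0
  · split <;> simp

lemma bit_eq_div_mod (k s : ℕ) : bit k s = k / 2^s % 2 := by
  unfold bit; rw [Nat.testBit_eq_decide_div_mod_eq]
  rcases Nat.mod_two_eq_zero_or_one (k / 2^s) with h | h <;> simp [h]

lemma bit_eq_zero_of_lt {k s : ℕ} (h : k < 2^s) : bit k s = 0 := by
  unfold bit; rw [Nat.testBit_lt_two_pow h]; rfl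

lemma bit_eq_zero_of_lt' {k s i : ℕ} (h : k < 2^s) (hi : s ≤ i) : bit k i = 0 :=
  bit_eq_zero_of_lt (lt_of_lt_of_le h (Nat.pow_le_pow_right (by norm_num) hi))

-- walsh product form
lemma walsh_eq_prod {L k : ℕ} (h : k < 2^L) (x : G) :
    walsh k x = ∏ i ∈ Finset.range L, (-1:ℝ)^(bit k i * (x i).val) := by
  have hform : walsh k x = ∏ i ∈ Finset.range k, (-1:ℝ)^(bit k i * (x i).val) := by
    unfold walsh
    refine Finset.prod_congr rfl fun i _ => ?_
    by_cases hb : k.testBit i <;> simp [bit, hb]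
  rw [hform]
  have key : ∀ M : ℕ, k ≤ M → L ≤ M →
      (∏ i ∈ Finset.range k, (-1:ℝ)^(bit k i * (x i).val))
        = ∏ i ∈ Finset.range M, (-1:ℝ)^(bit k i * (x i).val) := by
    intro M hkM hLM
    refine Finset.prod_subset (Finset.range_subset_range.2 hkM) fun i _ hi => ?_
    have hik : k ≤ i := by simpa using hi
    have : bit k i = 0 := bit_eq_zero_of_lt (lt_of_le_of_lt hik (Nat.lt_two_pow_self))
    simp [this]
  rw [key (max k L) (le_max_left _ _) (le_max_right _ _)]
  refine (Finset.prod_subset (Finset.range_subset_range.2 (le_max_right _ _)) fun i _ hi => ?_).symm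
  have hiL : L ≤ i := by simpa using hi
  have : bit k i = 0 := bit_eq_zero_of_lt' h hiL
  simp [this]

lemma walsh_two_pow (a : ℕ) (x : G) : walsh (2^a) x = (-1:ℝ)^((x a).val) := by
  rw [walsh_eq_prod (Nat.pow_lt_pow_right one_lt_two a.lt_succ_self) x]
  rw [Finset.prod_eq_single a]
  · have : bit (2^a) a = 1 := by unfold bit; rw [Nat.testBit_two_pow_self]; rfl
    simp [this]
  · intro b _ hb
    have : bit (2^a) b = 0 := by
      unfold bit; rw [Nat.testBit_two_pow]; simp [Ne.symm hb]
    simp [this]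
  · intro h; exact absurd (Finset.self_mem_range_succ a) h

lemma bit_two_pow_add {j i l : ℕ} (hi : i < 2^j) :
    bit (2^j + i) l = bit (2^j) l + bit i l := by
  rcases lt_trichotomy l j with h | h | h
  · rw [show bit (2^j + i) l = bit i l by
      unfold bit; rw [Nat.testBit_two_pow_add_gt h]]
    have : bit (2^j) l = 0 := by
      unfold bit; rw [Nat.testBit_two_pow]; simp [Nat.ne_of_gt h]
    omega
  · subst h
    have h1 : bit (2^l + i) l = 1 := by
      unfold bit; rw [Nat.testBit_two_pow_add_eq, Nat.testBit_lt_two_pow hi]; rfl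
    have h2 : bit (2^l) l = 1 := by unfold bit; rw [Nat.testBit_two_pow_self]; rfl
    have h3 : bit i l = 0 := bit_eq_zero_of_lt hi
    omega
  · have h1 : bit (2^j + i) l = 0 := by
      refine bit_eq_zero_of_lt ?_
      calc 2^j + i < 2^j + 2^j := by omega
      _ = 2^(j+1) := by ring
      _ ≤ 2^l := Nat.pow_le_pow_right (by norm_num) h
    have h2 : bit (2^j) l = 0 := by
      unfold bit; rw [Nat.testBit_two_pow]; simp [Nat.ne_of_lt h]
    have h3 : bit i l = 0 := bit_eq_zero_of_lt' hi (le_of_lt h)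
    omega

lemma walsh_two_pow_add {j i : ℕ} (hi : i < 2^j) (x : G) :
    walsh (2^j + i) x = walsh (2^j) x * walsh i x := by
  have hb1 : 2^j + i < 2^(j+1) := by
    have : (2:ℕ)^(j+1) = 2^j + 2^j := by ring
    omega
  have hb2 : (2:ℕ)^j < 2^(j+1) := Nat.pow_lt_pow_right one_lt_two j.lt_succ_self
  have hb3 : i < 2^(j+1) := lt_trans hi hb2
  rw [walsh_eq_prod hb1 x, walsh_eq_prod hb2 x, walsh_eq_prod hb3 x,
    ← Finset.prod_mul_distrib]
  refine Finset.prod_congr rfl fun l _ => ?_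
  rw [bit_two_pow_add hi, ← pow_add, add_mul]

lemma Dir_two_pow_add {j l : ℕ} (hl : l ≤ 2^j) (x : G) :
    Dir (2^j + l) x = Dir (2^j) x + walsh (2^j) x * Dir l x := by
  unfold Dir
  rw [Finset.sum_range_add, Finset.mul_sum]
  congr 1
  refine Finset.sum_congr rfl fun i hi => ?_
  exact walsh_two_pow_add (lt_of_lt_of_le (Finset.mem_range.1 hi) hl) x

lemma Dir_two_pow (a : ℕ) (x : G) :
    Dir (2^a) x = ∏ i ∈ Finset.range a, (1 + (-1:ℝ)^((x i).val)) := by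
  induction a with
  | zero => simp [Dir, walsh]
  | succ a ih =>
    have : (2:ℕ)^(a+1) = 2^a + 2^a := by ring
    rw [this, Dir_two_pow_add le_rfl x, walsh_two_pow, ih, Finset.prod_range_succ]
    ring

lemma walsh_one_of_lowzero {s l : ℕ} {x : G} (hx0 : ∀ i < s, (x i).val = 0)
    (hl : l < 2^s) : walsh l x = 1 := by
  rw [walsh_eq_prod hl x]
  refine Finset.prod_eq_one fun i hi => ?_
  rw [hx0 i (Finset.mem_range.1 hi)]
  simp

lemma Dir_small {s k : ℕ} {x : G} (hx0 : ∀ i < s, (x i).val = 0) (hk : k ≤ 2^s) :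
    Dir k x = k := by
  unfold Dir
  rw [Finset.sum_congr rfl (fun l hl =>
    walsh_one_of_lowzero hx0 (lt_of_lt_of_le (Finset.mem_range.1 hl) hk))]
  simp

lemma Rho_one_of_lt {s L k : ℕ} (hk : k < 2^(s+1)) (x : G) : Rho s L k x = 1 := by
  refine Finset.prod_eq_one fun i hi => ?_
  rw [bit_eq_zero_of_lt' hk (Finset.mem_Ico.1 hi).1]
  simp

lemma Rho_sq {s L k : ℕ} (x : G) : Rho s L k x * Rho s L k x = 1 := by
  unfold Rho
  rw [← Finset.prod_mul_distrib]
  refine Finset.prod_eq_one fun i _ => ?_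
  rw [← pow_add]
  exact Even.neg_one_pow ⟨bit k i * (x i).val, rfl⟩

lemma abs_Rho {s L k : ℕ} (x : G) : |Rho s L k x| = 1 := by
  unfold Rho
  rw [Finset.abs_prod]
  refine Finset.prod_eq_one fun i _ => ?_
  rw [abs_pow, abs_neg, abs_one, one_pow]

lemma Dir_annulus {L s : ℕ} (hs : s < L) (x : G) (hx0 : ∀ i < s, (x i).val = 0)
    (hxs : (x s).val = 1) :
    ∀ k, k < 2^L →
      Dir k x = Rho s L k x *
        (((1 : ℝ) - 2 * bit k s) * (k % 2^s : ℕ) + (bit k s : ℝ) * 2^s) := by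
  intro k
  induction k using Nat.strong_induction_on with
  | _ k ih =>
  intro hkL
  by_cases hsmall : k < 2^s
  · rw [Dir_small hx0 (le_of_lt hsmall), bit_eq_zero_of_lt hsmall,
      Nat.mod_eq_of_lt hsmall, Rho_one_of_lt (lt_trans hsmall (by
        exact Nat.pow_lt_pow_right one_lt_two s.lt_succ_self)) x]
    push_cast; ring
  · push_neg at hsmall
    have hk0 : k ≠ 0 := by
      have : 0 < 2^s := Nat.pow_pos (by norm_num)
      omega
    obtain ⟨j, hj1, hj2⟩ : ∃ j, 2^j ≤ k ∧ k < 2^(j+1) :=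
      ⟨k.log2, Nat.log2_self_le hk0, Nat.lt_log2_self⟩
    have hsj : s ≤ j := by
      by_contra hc
      push_neg at hc
      exact absurd (lt_of_lt_of_le hj2 (Nat.pow_le_pow_right (by norm_num) hc))
        (by omega)
    have hjL : j < L := by
      by_contra hc
      push_neg at hc
      exact absurd (lt_of_lt_of_le hkL (Nat.pow_le_pow_right (by norm_num) hc))
        (by omega)
    obtain ⟨k', hk'⟩ : ∃ k', k' = k - 2^j := ⟨k - 2^j, rfl⟩
    have hkk : k = 2^j + k' := by omega
    have hk'lt : k' < 2^j := by
      have : (2:ℕ)^(j+1) = 2^j + 2^j := by ring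
      omega
    rcases eq_or_lt_of_le hsj with hjs | hjs
    · -- j = s
      subst hjs
      have hk'2 : k' < 2^s := hk'lt
      rw [hkk, Dir_two_pow_add (le_of_lt hk'lt) x, walsh_two_pow, hxs,
        Dir_small hx0 (le_of_lt hk'2), Dir_two_pow]
      have hDs : ∏ i ∈ Finset.range s, (1 + (-1:ℝ)^((x i).val)) = 2^s := by
        have hh : ∀ i ∈ Finset.range s, (1 + (-1:ℝ)^((x i).val)) = 2 := by
          intro i hi; rw [hx0 i (Finset.mem_range.1 hi)]; norm_num
        rw [Finset.prod_congr rfl hh, Finset.prod_const, Finset.card_range]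
      rw [hDs]
      have hb : bit (2^s + k') s = 1 := by
        unfold bit; rw [Nat.testBit_two_pow_add_eq, Nat.testBit_lt_two_pow hk'2]; rfl
      have hmod : (2^s + k') % 2^s = k' := by
        rw [Nat.add_mod_left, Nat.mod_eq_of_lt hk'2]
      have hrho : Rho s L (2^s + k') x = 1 := by
        refine Rho_one_of_lt ?_ x
        have : (2:ℕ)^(s+1) = 2^s + 2^s := by ring
        omega
      rw [hb, hmod, hrho]
      push_cast; ring
    · -- j > s
      have hIH := ih k' (by omega) (by
        calc k' < 2^j := hk'lt
        _ ≤ 2^L := Nat.pow_le_pow_right (by norm_num) (le_of_lt hjL))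
      rw [hkk, Dir_two_pow_add (le_of_lt hk'lt) x, walsh_two_pow, Dir_two_pow]
      have hDj : ∏ i ∈ Finset.range j, (1 + (-1:ℝ)^((x i).val)) = 0 := by
        refine Finset.prod_eq_zero (Finset.mem_range.2 hjs) ?_
        rw [hxs]; norm_num
      rw [hDj, hIH]
      have hbs : bit (2^j + k') s = bit k' s := by
        unfold bit; rw [Nat.testBit_two_pow_add_gt hjs]
      have hmod : (2^j + k') % 2^s = k' % 2^s := by
        have : (2:ℕ)^s ∣ 2^j := pow_dvd_pow 2 hsj
        obtain ⟨c, hc⟩ := this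
        rw [hc, add_comm, Nat.add_mul_mod_self_left]
      have hjmem : j ∈ Finset.Ico (s+1) L := Finset.mem_Ico.2 ⟨by omega, hjL⟩
      have hrho : Rho s L (2^j + k') x = (-1:ℝ)^((x j).val) * Rho s L k' x := by
        unfold Rho
        have hprod : ∏ i ∈ (Finset.Ico (s+1) L).erase j, (-1:ℝ)^(bit (2^j + k') i * (x i).val)
            = ∏ i ∈ (Finset.Ico (s+1) L).erase j, (-1:ℝ)^(bit k' i * (x i).val) := by
          refine Finset.prod_congr rfl fun i hi => ?_
          have hij : i ≠ j := Finset.ne_of_mem_erase hi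
          have hbi : bit (2^j + k') i = bit k' i := by
            rcases lt_or_gt_of_ne hij with h | h
            · unfold bit; rw [Nat.testBit_two_pow_add_gt h]
            · rw [bit_eq_zero_of_lt' (show 2^j + k' < 2^(j+1) by
                have : (2:ℕ)^(j+1) = 2^j + 2^j := by ring
                omega) h, bit_eq_zero_of_lt' ((lt_of_lt_of_le hk'lt (Nat.pow_le_pow_right (by norm_num) (Nat.le_succ j)))) h]
          rw [hbi]
        have hbj : bit (2^j + k') j = 1 := by
          unfold bit; rw [Nat.testBit_two_pow_add_eq, Nat.testBit_lt_two_pow hk'lt]; rfl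
        have hbj' : bit k' j = 0 := bit_eq_zero_of_lt hk'lt
        rw [← Finset.mul_prod_erase _ _ hjmem,
          ← Finset.mul_prod_erase _ (fun i => (-1:ℝ)^(bit k' i * (x i).val)) hjmem,
          hprod, hbj, hbj']
        simp
      rw [hbs, hmod, hrho]
      ring

def fv (k s : ℕ) : ℤ := ((k % 2^s : ℕ) : ℤ) - bit k s * 2^s

lemma fv_zero (k : ℕ) : fv k 0 = -(bit k 0) := by simp [fv]

lemma fv_succ (k s : ℕ) :
    fv k (s+1) = fv k s + ((bit k s : ℤ) - bit k (s+1)) * 2^(s+1) := by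
  unfold fv
  have hmod : k % 2^(s+1) = k % 2^s + 2^s * bit k s := by
    rw [bit_eq_div_mod, pow_succ, Nat.mod_mul]
  rw [hmod]
  push_cast
  ring

lemma dlt_succ_bound (k s : ℕ) : |(bit k s : ℤ) - bit k (s+1)| ≤ dlt k (s+1) := by
  unfold dlt bit
  cases h1 : k.testBit (s+1) <;> cases h2 : k.testBit s <;> simp [h1, h2]

lemma fv_abs_le (k s : ℕ) :
    |fv k s| ≤ ∑ j ∈ Finset.range (s+1), (dlt k j : ℤ) * 2^j := by
  induction s with
  | zero =>
    rw [fv_zero]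
    simp [dlt]
  | succ s ih =>
    rw [fv_succ, Finset.sum_range_succ]
    calc |fv k s + ((bit k s : ℤ) - bit k (s+1)) * 2^(s+1)|
        ≤ |fv k s| + |((bit k s : ℤ) - bit k (s+1))| * |(2:ℤ)^(s+1)| := by
          rw [← abs_mul]; exact abs_add_le _ _
      _ ≤ (∑ j ∈ Finset.range (s+1), (dlt k j : ℤ) * 2^j) + (dlt k (s+1) : ℤ) * 2^(s+1) := by
          have h1 := dlt_succ_bound k s
          have h2 : |(2:ℤ)^(s+1)| = 2^(s+1) := abs_of_nonneg (by positivity)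
          rw [h2]
          refine add_le_add ih (mul_le_mul_of_nonneg_right h1 (by positivity))

lemma walsh_annulus {L s k : ℕ} (hs : s < L) (hk : k < 2^L) (x : G)
    (hx0 : ∀ i < s, (x i).val = 0) (hxs : (x s).val = 1) :
    walsh k x = (-1:ℝ)^(bit k s) * Rho s L k x := by
  rw [walsh_eq_prod hk x, Finset.range_eq_Ico,
    ← Finset.prod_Ico_consecutive _ (Nat.zero_le s) (le_of_lt hs),
    Finset.prod_eq_prod_Ico_succ_bot hs]
  have h1 : ∏ i ∈ Finset.Ico 0 s, (-1:ℝ)^(bit k i * (x i).val) = 1 := by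
    refine Finset.prod_eq_one fun i hi => ?_
    rw [hx0 i (Finset.mem_Ico.1 hi).2]
    simp
  rw [h1, hxs, one_mul, mul_one]
  rfl

lemma fv_cast_real (k s : ℕ) :
    ((fv k s : ℤ) : ℝ) = ((k % 2^s : ℕ) : ℝ) - (bit k s : ℝ) * 2^s := by
  unfold fv
  push_cast [Int.cast_natCast]
  norm_cast

lemma walsh_mul_Dir_annulus {L s k : ℕ} (hs : s < L) (hk : k < 2^L) (x : G)
    (hx0 : ∀ i < s, (x i).val = 0) (hxs : (x s).val = 1) :
    walsh k x * Dir k x = ((fv k s : ℤ) : ℝ) := by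
  rw [walsh_annulus hs hk x hx0 hxs, Dir_annulus hs x hx0 hxs k hk, fv_cast_real]
  have hr : Rho s L k x = 1 ∨ Rho s L k x = -1 :=
    mul_self_eq_one_iff.mp (Rho_sq x)
  rcases Nat.le_one_iff_eq_zero_or_eq_one.mp (bit_le_one k s) with h | h <;>
    rcases hr with hr | hr <;> rw [h, hr] <;> push_cast <;> ring

lemma Dir_annulus_signed {L s k : ℕ} (hs : s < L) (hk : k < 2^L) (x : G)
    (hx0 : ∀ i < s, (x i).val = 0) (hxs : (x s).val = 1) :
    |Dir k x| = |((fv k s : ℤ) : ℝ)| := by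
  rw [Dir_annulus hs x hx0 hxs k hk, abs_mul, abs_Rho, one_mul, fv_cast_real]
  rcases Nat.le_one_iff_eq_zero_or_eq_one.mp (bit_le_one k s) with h | h <;> rw [h]
  · norm_num
  · have heq : (1 - 2 * ((1:ℕ):ℝ)) * ((k % 2^s : ℕ):ℝ) + ((1:ℕ):ℝ) * 2^s
        = -(((k % 2^s : ℕ):ℝ) - ((1:ℕ):ℝ) * 2^s) := by push_cast; ring
    rw [heq, abs_neg]

def wgt (n m j : ℕ) : ℕ := 2 * dlt m j + dlt n j * (1 - dlt m j)

lemma dlt_le_wgt (n m j : ℕ) : dlt n j ≤ wgt n m j := by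
  unfold wgt
  rcases Nat.le_one_iff_eq_zero_or_eq_one.mp (dlt_le_one m j) with h | h <;>
    rcases Nat.le_one_iff_eq_zero_or_eq_one.mp (dlt_le_one n j) with h' | h' <;>
    simp [h, h']

lemma two_dlt_le_wgt (n m j : ℕ) : 2 * dlt m j ≤ wgt n m j := Nat.le_add_right _ _

lemma abs_pair_bound {a b W : ℝ} (ha : |a| ≤ W) (hb : |b| ≤ W) :
    |a + b| + |a - b| ≤ 2 * W := by
  obtain ⟨ha1, ha2⟩ := abs_le.mp ha
  obtain ⟨hb1, hb2⟩ := abs_le.mp hb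
  rcases abs_cases (a+b) with ⟨h1,_⟩ | ⟨h1,_⟩ <;>
    rcases abs_cases (a-b) with ⟨h2,_⟩ | ⟨h2,_⟩ <;> rw [h1, h2] <;> linarith

lemma tdig_le_one (t : ℝ) (j : ℕ) : tdig t j ≤ 1 := by
  unfold tdig
  rcases Int.emod_two_eq_zero_or_one ⌊t * 2 ^ (j+1)⌋ with h | h <;> simp [h]

lemma sum_range_pow2 (N : ℕ) : ∑ i ∈ Finset.range N, 2^i = 2^N - 1 := by
  induction N with
  | zero => simp
  | succ N ih =>
    rw [Finset.sum_range_succ, ih]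
    have h1 : (1:ℕ) ≤ 2^N := Nat.one_le_two_pow
    have h2 : (2:ℕ)^(N+1) = 2^N + 2^N := by ring
    omega

lemma mOf_lt (t : ℝ) (N : ℕ) : mOf t N < 2^N := by
  unfold mOf
  have hle : ∑ i ∈ Finset.range N, tdig t (i+1) * 2^i ≤ ∑ i ∈ Finset.range N, 2^i :=
    Finset.sum_le_sum fun i _ => by
      have := tdig_le_one t (i+1)
      have h2i : 0 < 2^i := Nat.pow_pos (by norm_num)
      nlinarith
  rw [sum_range_pow2] at hle
  have h1 : (1:ℕ) ≤ 2^N := Nat.one_le_two_pow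
  omega

lemma bit_top {N n : ℕ} (h1 : 2^N ≤ n) (h2 : n < 2^(N+1)) : bit n N = 1 := by
  have hd : n / 2^N = 1 := by
    refine Nat.div_eq_of_lt_le (by omega) ?_
    have : (2:ℕ)^(N+1) = 2 * 2^N := by ring
    omega
  rw [bit_eq_div_mod, hd]

lemma Rho_flip {N s k : ℕ} (hsN : s < N) (x y : G)
    (hagree : ∀ i < N, (x i).val = (y i).val)
    (hxN : (x N).val = 0) (hyN : (y N).val = 1) (hbk : bit k N = 1) :
    Rho s (N+1) k y = - Rho s (N+1) k x := by
  unfold Rho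
  have hmem : N ∈ Finset.Ico (s+1) (N+1) := Finset.mem_Ico.2 ⟨hsN, N.lt_succ_self⟩
  rw [← Finset.mul_prod_erase _ _ hmem,
    ← Finset.mul_prod_erase _ (fun i => (-1:ℝ)^(bit k i * (x i).val)) hmem]
  have hP : ∏ i ∈ (Finset.Ico (s+1) (N+1)).erase N, (-1:ℝ)^(bit k i * (y i).val)
      = ∏ i ∈ (Finset.Ico (s+1) (N+1)).erase N, (-1:ℝ)^(bit k i * (x i).val) := by
    refine Finset.prod_congr rfl fun i hi => ?_
    have hiN : i ≠ N := Finset.ne_of_mem_erase hi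
    have hiN' : i < N := by
      have := (Finset.mem_Ico.1 (Finset.mem_of_mem_erase hi)).2
      omega
    rw [hagree i hiN']
  rw [hP, hbk, hxN, hyN]
  ring

lemma pair_bound (t : ℝ) (N n : ℕ) (h1 : 2^N ≤ n) (h2 : n < 2^(N+1)) {s : ℕ} (hsN : s < N)
    (x y : G) (hx0 : ∀ i < s, (x i).val = 0) (hxs : (x s).val = 1)
    (hy0 : ∀ i < s, (y i).val = 0) (hys : (y s).val = 1)
    (hagree : ∀ i < N, (x i).val = (y i).val)
    (hxN : (x N).val = 0) (hyN : (y N).val = 1) :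
    |Dconj t N n x| + |Dconj t N n y|
      ≤ 2 * ∑ j ∈ Finset.range (s+1), (wgt n (mOf t N) j : ℝ) * 2^j := by
  set m := mOf t N with hm
  have hsL : s < N+1 := by omega
  have hmN : m < 2^N := mOf_lt t N
  have h2NL : (2:ℕ)^N < 2^(N+1) := Nat.pow_lt_pow_right one_lt_two N.lt_succ_self
  have hmL : m < 2^(N+1) := lt_trans hmN h2NL
  have hD2 : ∀ z : G, (∀ i < s, (z i).val = 0) → ((z s).val = 1) → Dir (2^N) z = 0 := by
    intro z hz0 hzs
    rw [Dir_annulus hsL z hz0 hzs _ h2NL]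
    have hb : bit (2^N) s = 0 := by
      unfold bit; rw [Nat.testBit_two_pow]
      simp [Nat.ne_of_gt hsN]
    have hmod : (2^N) % 2^s = 0 := by
      obtain ⟨c, hc⟩ := pow_dvd_pow 2 (le_of_lt hsN)
      rw [hc, Nat.mul_mod_right]
    rw [hb, hmod]
    norm_num
  have hDnx := Dir_annulus hsL x hx0 hxs n h2
  have hDny := Dir_annulus hsL y hy0 hys n h2
  have hwmx := walsh_mul_Dir_annulus hsL hmL x hx0 hxs
  have hwmy := walsh_mul_Dir_annulus hsL hmL y hy0 hys
  have hbnN : bit n N = 1 := bit_top h1 h2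
  have hflip := Rho_flip hsN x y hagree hxN hyN hbnN (k := n)
  have hD2x := hD2 x hx0 hxs
  have hD2y := hD2 y hy0 hys
  set ε : ℝ := (tdig t (N+1) : ℝ) with hε
  set r : ℝ := Rho s (N+1) n x with hr
  set A : ℝ := (1 - 2 * (bit n s : ℝ)) * ((n % 2^s : ℕ) : ℝ) + (bit n s : ℝ) * 2^s with hA
  set c : ℝ := ((fv m s : ℤ) : ℝ) with hc
  have hDcx : Dconj t N n x
      = Dir n x - 2 * walsh m x * Dir m x - 2 * ε * (Dir n x - Dir (2^N) x) := by
    rw [hm]; rfl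
  have hDcy : Dconj t N n y
      = Dir n y - 2 * walsh m y * Dir m y - 2 * ε * (Dir n y - Dir (2^N) y) := by
    rw [hm]; rfl
  have hDx : Dconj t N n x = (-2*c) + (1 - 2*ε) * (r * A) := by
    rw [hDcx]
    linear_combination (1 - 2*ε) * hDnx + (-2 : ℝ) * hwmx + (2*ε) * hD2x
  have hDy : Dconj t N n y = (-2*c) - (1 - 2*ε) * (r * A) := by
    rw [hDcy]
    linear_combination (1 - 2*ε) * hDny + ((1 - 2*ε) * A) * hflip
      + (-2 : ℝ) * hwmy + (2*ε) * hD2y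
  rw [hDx, hDy]
  set W : ℝ := ∑ j ∈ Finset.range (s+1), (wgt n m j : ℝ) * 2^j with hW
  refine abs_pair_bound ?_ ?_
  · -- |−2c| ≤ W
    have hcb : |c| ≤ ∑ j ∈ Finset.range (s+1), (dlt m j : ℝ) * 2^j := by
      rw [hc, ← Int.cast_abs]
      calc ((|fv m s| : ℤ) : ℝ)
          ≤ ((∑ j ∈ Finset.range (s+1), (dlt m j : ℤ) * 2^j : ℤ) : ℝ) := by
            exact_mod_cast fv_abs_le m s
        _ = ∑ j ∈ Finset.range (s+1), (dlt m j : ℝ) * 2^j := by push_cast; rfl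
    have hsum : ∑ j ∈ Finset.range (s+1), 2 * ((dlt m j : ℝ) * 2^j) ≤ W := by
      rw [hW]
      refine Finset.sum_le_sum fun j _ => ?_
      have := two_dlt_le_wgt n m j
      have h2j : (0:ℝ) ≤ 2^j := by positivity
      have hcast : 2 * (dlt m j : ℝ) ≤ (wgt n m j : ℝ) := by exact_mod_cast this
      nlinarith
    rw [abs_mul, abs_neg, abs_two]
    calc 2 * |c| ≤ 2 * ∑ j ∈ Finset.range (s+1), (dlt m j : ℝ) * 2^j := by linarith
      _ = ∑ j ∈ Finset.range (s+1), 2 * ((dlt m j : ℝ) * 2^j) := by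
          rw [Finset.mul_sum]
      _ ≤ W := hsum
  · -- |(1−2ε)(rA)| ≤ W
    rw [abs_mul]
    have h1e : |1 - 2*ε| ≤ 1 := by
      have h0 : (0:ℝ) ≤ ε := by rw [hε]; positivity
      have hle1 : ε ≤ 1 := by rw [hε]; exact_mod_cast tdig_le_one t (N+1)
      rw [abs_le]; constructor <;> linarith
    have hra : |r * A| = |((fv n s : ℤ):ℝ)| := by
      rw [← hDnx, Dir_annulus_signed hsL h2 x hx0 hxs]
    have hnb : |((fv n s : ℤ):ℝ)| ≤ ∑ j ∈ Finset.range (s+1), (dlt n j : ℝ) * 2^j := by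
      rw [← Int.cast_abs]
      calc ((|fv n s| : ℤ) : ℝ)
          ≤ ((∑ j ∈ Finset.range (s+1), (dlt n j : ℤ) * 2^j : ℤ) : ℝ) := by
            exact_mod_cast fv_abs_le n s
        _ = ∑ j ∈ Finset.range (s+1), (dlt n j : ℝ) * 2^j := by push_cast; rfl
    have hsum : ∑ j ∈ Finset.range (s+1), (dlt n j : ℝ) * 2^j ≤ W := by
      rw [hW]
      refine Finset.sum_le_sum fun j _ => ?_
      have := dlt_le_wgt n m j
      have h2j : (0:ℝ) ≤ 2^j := by positivity
      have hcast : (dlt n j : ℝ) ≤ (wgt n m j : ℝ) := by exact_mod_cast this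
      nlinarith
    calc |1 - 2*ε| * |r * A| ≤ 1 * |r * A| :=
        mul_le_mul_of_nonneg_right h1e (abs_nonneg _)
      _ = |((fv n s : ℤ):ℝ)| := by rw [one_mul, hra]
      _ ≤ W := le_trans hnb hsum

lemma pair01_bound (t : ℝ) (N n : ℕ) (h1 : 2^N ≤ n) (h2 : n < 2^(N+1))
    (x y : G) (hx : ∀ i < N+1, (x i).val = 0)
    (hy0 : ∀ i < N, (y i).val = 0) (hyN : (y N).val = 1) :
    |Dconj t N n x| + |Dconj t N n y| ≤ 2 * 2^N := by
  set m := mOf t N with hm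
  have hmN : m < 2^N := mOf_lt t N
  have h2NL : (2:ℕ)^N < 2^(N+1) := Nat.pow_lt_pow_right one_lt_two N.lt_succ_self
  have hmL : m < 2^(N+1) := lt_trans hmN h2NL
  set ε : ℝ := (tdig t (N+1) : ℝ) with hε
  -- x values
  have hDnx : Dir n x = n := Dir_small hx (le_of_lt h2)
  have hDmx : Dir m x = m := Dir_small hx (le_of_lt hmL)
  have hD2x : Dir (2^N) x = 2^N := by
    rw [Dir_small hx (le_of_lt h2NL)]; push_cast; ring
  have hwx : walsh m x = 1 := walsh_one_of_lowzero hx hmL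
  -- y values
  have hNL : N < N + 1 := N.lt_succ_self
  have hDny : Dir n y = (1 - 2 * (bit n N : ℝ)) * ((n % 2^N : ℕ) : ℝ) + (bit n N : ℝ) * 2^N := by
    have := Dir_annulus hNL y hy0 hyN n h2
    rwa [Rho_one_of_lt h2 y, one_mul] at this
  have hbnN : bit n N = 1 := bit_top h1 h2
  have hwDy : walsh m y * Dir m y = ((fv m N : ℤ) : ℝ) :=
    walsh_mul_Dir_annulus hNL hmL y hy0 hyN
  have hfvm : ((fv m N : ℤ) : ℝ) = m := by
    rw [fv_cast_real, bit_eq_zero_of_lt hmN, Nat.mod_eq_of_lt hmN]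
    push_cast; ring
  have hD2y : Dir (2^N) y = 2^N := by
    have := Dir_annulus hNL y hy0 hyN (2^N) h2NL
    rw [Rho_one_of_lt h2NL y, one_mul] at this
    have hb : bit (2^N) N = 1 := by unfold bit; rw [Nat.testBit_two_pow_self]; rfl
    have hmod : (2^N) % 2^N = 0 := Nat.mod_self _
    rw [hb, hmod] at this
    rw [this]; push_cast; ring
  set n' : ℝ := ((n % 2^N : ℕ) : ℝ) with hn'
  have hnval : (n : ℝ) = 2^N + n' := by
    rw [hn']
    have hlt : n - 2^N < 2^N := by
      have h2' : (2:ℕ)^(N+1) = 2 * 2^N := by ring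
      omega
    rw [Nat.mod_eq_sub_mod h1, Nat.mod_eq_of_lt hlt]
    have : ((n - 2^N : ℕ) : ℝ) = (n:ℝ) - 2^N := by
      push_cast [Nat.cast_sub h1]; ring
    rw [this]; ring
  have hDcx : Dconj t N n x
      = Dir n x - 2 * walsh m x * Dir m x - 2 * ε * (Dir n x - Dir (2^N) x) := by
    rw [hm]; rfl
  have hDcy : Dconj t N n y
      = Dir n y - 2 * walsh m y * Dir m y - 2 * ε * (Dir n y - Dir (2^N) y) := by
    rw [hm]; rfl
  have hDx : Dconj t N n x = ((2:ℝ)^N - 2*m) + (1 - 2*ε) * n' := by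
    rw [hDcx, hDnx, hDmx, hD2x, hwx, hnval]; ring
  have hDy : Dconj t N n y = ((2:ℝ)^N - 2*m) - (1 - 2*ε) * n' := by
    rw [hDcy, hDny, hbnN]
    have h2' : walsh m y * Dir m y = (m:ℝ) := by rw [hwDy, hfvm]
    rw [hD2y]
    push_cast
    linear_combination (-2:ℝ) * h2'
  rw [hDx, hDy]
  refine abs_pair_bound ?_ ?_
  · rw [abs_le]
    have hm0 : (0:ℝ) ≤ m := Nat.cast_nonneg m
    have hmlt : (m:ℝ) < 2^N := by exact_mod_cast hmN
    constructor <;> linarith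
  · have h1e : |1 - 2*ε| ≤ 1 := by
      have h0 : (0:ℝ) ≤ ε := by rw [hε]; positivity
      have hle1 : ε ≤ 1 := by rw [hε]; exact_mod_cast tdig_le_one t (N+1)
      rw [abs_le]; constructor <;> linarith
    have hn'le : |n'| ≤ 2^N := by
      rw [hn', abs_of_nonneg (Nat.cast_nonneg _)]
      have : n % 2^N < 2^N := Nat.mod_lt _ (Nat.pow_pos (by norm_num))
      exact_mod_cast le_of_lt this
    calc |(1 - 2*ε) * n'| = |1 - 2*ε| * |n'| := abs_mul _ _
      _ ≤ 1 * 2^N := mul_le_mul h1e hn'le (abs_nonneg _) (by norm_num)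
      _ = 2^N := one_mul _

lemma measurable_walsh (k : ℕ) : Measurable (walsh k) := by
  unfold walsh
  refine Finset.measurable_prod _ fun i _ => ?_
  split
  · exact (measurable_from_top (f := fun v : ZMod 2 => (-1:ℝ)^v.val)).comp
      (measurable_pi_apply i)
  · exact measurable_const

lemma measurable_Dir (k : ℕ) : Measurable (Dir k) := by
  unfold Dir
  exact Finset.measurable_sum _ fun i _ => measurable_walsh i

lemma measurable_Dconj (t : ℝ) (N n : ℕ) : Measurable (Dconj t N n) := by
  unfold Dconj
  exact (((measurable_Dir n).sub
    ((measurable_const.mul (measurable_walsh (mOf t N))).mul (measurable_Dir (mOf t N)))).sub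
    (measurable_const.mul ((measurable_Dir n).sub (measurable_Dir (2^N)))))

lemma measurable_toG : Measurable toG := by
  refine measurable_pi_lambda _ fun n => ?_
  have h1 : Measurable fun x : ℝ => ⌊x * 2 ^ (n + 1)⌋ := by measurability
  exact (measurable_from_top).comp h1

lemma walsh_dep {M k : ℕ} (hk : k < 2^M) {x y : G} (h : ∀ i < M, x i = y i) :
    walsh k x = walsh k y := by
  rw [walsh_eq_prod hk x, walsh_eq_prod hk y]
  exact Finset.prod_congr rfl fun i hi => by rw [h i (Finset.mem_range.1 hi)]

lemma Dir_dep {M k : ℕ} (hk : k ≤ 2^M) {x y : G} (h : ∀ i < M, x i = y i) :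
    Dir k x = Dir k y := by
  unfold Dir
  exact Finset.sum_congr rfl fun l hl =>
    walsh_dep (lt_of_lt_of_le (Finset.mem_range.1 hl) hk) h

lemma Dconj_dep (t : ℝ) (N n : ℕ) (h2 : n < 2^(N+1)) {x y : G}
    (h : ∀ i < N+1, x i = y i) : Dconj t N n x = Dconj t N n y := by
  have hm : mOf t N < 2^(N+1) :=
    lt_trans (mOf_lt t N) (Nat.pow_lt_pow_right one_lt_two N.lt_succ_self)
  unfold Dconj
  rw [Dir_dep (le_of_lt h2) h, Dir_dep (le_of_lt hm) h, walsh_dep hm h,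
    Dir_dep (le_of_lt (Nat.pow_lt_pow_right one_lt_two N.lt_succ_self : (2:ℕ)^N < 2^(N+1))) h]

lemma floor_dyadic {M j i : ℕ} (hi : i < M) {x : ℝ}
    (hx : (j:ℝ)/2^M ≤ x) (hx' : x < ((j:ℝ)+1)/2^M) :
    ⌊x * 2^(i+1)⌋ = ((j / 2^(M-1-i) : ℕ) : ℤ) := by
  set q : ℕ := 2^(M-1-i) with hq
  have hq0 : (0:ℝ) < (q:ℕ) := by positivity
  have hMq : (2:ℝ)^M = (q:ℝ) * 2^(i+1) := by
    rw [hq]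
    push_cast
    rw [← pow_add]
    congr 1
    omega
  have h2M : (0:ℝ) < 2^M := by positivity
  have hxl : (j:ℝ) ≤ x * 2^M := by
    rw [div_le_iff₀ h2M] at hx
    linarith
  have hxu : x * 2^M < (j:ℝ) + 1 := by
    rw [lt_div_iff₀ h2M] at hx'
    linarith [hx']
  rw [show x * 2^M = (x * 2^(i+1)) * q by rw [hMq]; ring] at hxl hxu
  have hA : ((j / q : ℕ) : ℝ) * q ≤ (j:ℝ) := by
    exact_mod_cast Nat.div_mul_le_self j q
  have hB : (j:ℝ) + 1 ≤ (((j / q : ℕ) : ℝ) + 1) * q := by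
    have hnat : j + 1 ≤ (j / q + 1) * q := by
      have h1 := Nat.div_add_mod j q
      have h2 : j % q < q := Nat.mod_lt _ (by positivity)
      nlinarith
    exact_mod_cast hnat
  rw [Int.floor_eq_iff]
  constructor
  · push_cast
    have hle : ((j / q : ℕ) : ℝ) * q ≤ (x * 2^(i+1)) * q := le_trans hA hxl
    exact le_of_mul_le_mul_right hle hq0
  · push_cast
    have hlt : (x * 2^(i+1)) * q < (((j / q : ℕ) : ℝ) + 1) * q := lt_of_lt_of_le hxu hB
    exact lt_of_mul_lt_mul_right hlt (le_of_lt hq0)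

lemma toG_dep_interval {M j : ℕ} {x : ℝ}
    (hx : (j:ℝ)/2^M ≤ x) (hx' : x < ((j:ℝ)+1)/2^M) {i : ℕ} (hi : i < M) :
    toG x i = toG ((j:ℝ)/2^M) i := by
  unfold toG
  have h2M : (0:ℝ) < 2^M := by positivity
  have hself : (j:ℝ)/2^M ≤ (j:ℝ)/2^M := le_refl _
  have hself' : (j:ℝ)/2^M < ((j:ℝ)+1)/2^M := by
    apply (div_lt_div_iff₀ h2M h2M).mpr
    nlinarith
  rw [floor_dyadic hi hx hx', floor_dyadic hi hself hself']

lemma toG_val {M j i : ℕ} (hi : i < M) :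
    ((toG ((j:ℝ)/2^M)) i).val = bit j (M-1-i) := by
  unfold toG
  have h2M : (0:ℝ) < 2^M := by positivity
  have hself : (j:ℝ)/2^M ≤ (j:ℝ)/2^M := le_refl _
  have hself' : (j:ℝ)/2^M < ((j:ℝ)+1)/2^M := by
    apply (div_lt_div_iff₀ h2M h2M).mpr
    nlinarith
  rw [floor_dyadic hi hself hself']
  rw [Int.cast_natCast, ZMod.val_natCast, bit_eq_div_mod]

lemma Leb_eq_sum (t : ℝ) (N n : ℕ) (h2 : n < 2^(N+1)) :
    Leb t N n = (2^(N+1):ℝ)⁻¹ *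
      ∑ j ∈ Finset.range (2^(N+1)), |Dconj t N n (toG ((j:ℝ)/2^(N+1)))| := by
  classical
  set M := N + 1 with hM
  set f : G → ℝ := fun x => |Dconj t N n x| with hf
  have hfm : Measurable f := (measurable_Dconj t N n).abs
  have hmap : Leb t N n = ∫ x in Set.Ico (0:ℝ) 1, f (toG x) := by
    unfold Leb muG
    exact integral_map measurable_toG.aemeasurable hfm.aestronglyMeasurable
  rw [hmap]
  set I : ℕ → Set ℝ := fun j => Set.Ico ((j:ℝ)/2^M) (((j:ℝ)+1)/2^M) with hI
  have h2M : (0:ℝ) < 2^M := by positivity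
  have hcover : Set.Ico (0:ℝ) 1 = ⋃ j ∈ Finset.range (2^M), I j := by
    ext z
    simp only [Set.mem_Ico, Set.mem_iUnion, Finset.mem_range, hI]
    constructor
    · rintro ⟨h0, h1z⟩
      have h0f : 0 ≤ ⌊z * 2^M⌋ := Int.floor_nonneg.mpr (by positivity)
      have hfl : ⌊z * 2^M⌋ < (2^M : ℕ) := by
        apply Int.floor_lt.mpr
        push_cast
        nlinarith
      refine ⟨⌊z * 2^M⌋.toNat, ?_, ?_, ?_⟩
      · have hcast : (⌊z * 2^M⌋.toNat : ℤ) < ((2^M : ℕ) : ℤ) := by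
          rw [Int.toNat_of_nonneg h0f]; exact_mod_cast hfl
        exact_mod_cast hcast
      · rw [div_le_iff₀ h2M]
        have : ((⌊z * 2^M⌋.toNat : ℤ) : ℝ) ≤ z * 2^M := by
          rw [Int.toNat_of_nonneg h0f]; exact Int.floor_le _
        exact_mod_cast this
      · rw [lt_div_iff₀ h2M]
        have : z * 2^M < ((⌊z * 2^M⌋.toNat : ℤ) : ℝ) + 1 := by
          rw [Int.toNat_of_nonneg h0f]; exact Int.lt_floor_add_one _
        exact_mod_cast this
    · rintro ⟨j, hj, hjl, hju⟩
      constructor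
      · have : (0:ℝ) ≤ (j:ℝ)/2^M := by positivity
        linarith
      · have hjb : (j:ℝ) + 1 ≤ (2^M : ℕ) := by exact_mod_cast hj
        have : ((j:ℝ)+1)/2^M ≤ 1 := by
          rw [div_le_one h2M]
          calc (j:ℝ) + 1 ≤ ((2^M : ℕ) : ℝ) := hjb
            _ = 2^M := by push_cast; rfl
        linarith
  have hconst : ∀ j : ℕ, ∀ x ∈ I j, f (toG x) = f (toG ((j:ℝ)/2^M)) := by
    intro j x hx
    rw [hf]
    exact congrArg abs (Dconj_dep t N n h2 (fun i hi => toG_dep_interval hx.1 hx.2 hi))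
  have hdisjkey : ∀ a b : ℕ, a < b → Disjoint (I a) (I b) := by
    intro a b hab
    rw [hI, Set.disjoint_left]
    rintro z ⟨_, hz2⟩ ⟨hz3, _⟩
    have hab' : ((a:ℝ)+1) ≤ (b:ℝ) := by exact_mod_cast hab
    have : ((a:ℝ)+1)/2^M ≤ (b:ℝ)/2^M := by gcongr
    linarith
  have hdisj : (↑(Finset.range (2^M)) : Set ℕ).Pairwise (Function.onFun Disjoint I) :=
    fun a _ b _ hab => (lt_or_gt_of_ne hab).elim (hdisjkey a b) (fun h => (hdisjkey b a h).symm)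
  have hint : ∀ j ∈ Finset.range (2^M), IntegrableOn (fun x => f (toG x)) (I j) volume := by
    intro j _
    have hc : IntegrableOn (fun _ : ℝ => f (toG ((j:ℝ)/2^M))) (I j) volume := by
      refine integrableOn_const ?_
      rw [hI]
      exact measure_Ico_lt_top.ne
    exact hc.congr_fun (fun x hx => (hconst j x hx).symm) measurableSet_Ico
  rw [hcover, integral_biUnion_finset _ (fun j _ => measurableSet_Ico) hdisj hint]
  have heval : ∀ j ∈ Finset.range (2^M),
      ∫ x in I j, f (toG x) = (2^M : ℝ)⁻¹ * f (toG ((j:ℝ)/2^M)) := by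
    intro j _
    rw [setIntegral_congr_fun measurableSet_Ico (hconst j), setIntegral_const]
    rw [measureReal_def, Real.volume_Ico]
    have hgap : ((j:ℝ)+1)/2^M - (j:ℝ)/2^M = (2^M : ℝ)⁻¹ := by field_simp; ring
    rw [hgap, ENNReal.toReal_ofReal (by positivity), smul_eq_mul]
  rw [Finset.sum_congr rfl heval, ← Finset.mul_sum]

lemma bit_double_even (q k : ℕ) (hk : 1 ≤ k) : bit (2*q) k = bit q (k-1) := by
  rw [bit_eq_div_mod, bit_eq_div_mod]
  have hk' : k = (k-1) + 1 := by omega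
  rw [hk', pow_succ]
  congr 1
  rw [mul_comm (2^(k-1)) 2, ← Nat.div_div_eq_div_mul]
  congr 1
  omega

lemma bit_double_odd (q k : ℕ) (hk : 1 ≤ k) : bit (2*q+1) k = bit q (k-1) := by
  rw [bit_eq_div_mod, bit_eq_div_mod]
  have hk' : k = (k-1) + 1 := by omega
  rw [hk', pow_succ]
  congr 1
  rw [mul_comm (2^(k-1)) 2, ← Nat.div_div_eq_div_mul]
  congr 1
  omega

lemma sum_pairs (K : ℕ) (F : ℕ → ℝ) :
    ∑ j ∈ Finset.range (2*K), F j = ∑ q ∈ Finset.range K, (F (2*q) + F (2*q+1)) := by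
  induction K with
  | zero => simp
  | succ K ih =>
    rw [show 2*(K+1) = 2*K + 1 + 1 by ring, Finset.sum_range_succ, Finset.sum_range_succ,
      ih, Finset.sum_range_succ]
    rw [add_assoc]

lemma sum_Ico_pow2 (F : ℕ → ℝ) (N : ℕ) :
    ∑ q ∈ Finset.Ico 1 (2^N), F q
      = ∑ l ∈ Finset.range N, ∑ q ∈ Finset.Ico (2^l) (2^(l+1)), F q := by
  induction N with
  | zero => simp
  | succ N ih =>
    rw [Finset.sum_range_succ, ← ih,
      Finset.sum_Ico_consecutive F (Nat.one_le_two_pow : 1 ≤ 2^N)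
        (Nat.pow_le_pow_right (by norm_num) N.le_succ)]

lemma sum_pow2_real (K : ℕ) : ∑ i ∈ Finset.range K, (2:ℝ)^i ≤ 2^K := by
  induction K with
  | zero => simp
  | succ K ih =>
    rw [Finset.sum_range_succ]
    have : (2:ℝ)^(K+1) = 2^K + 2^K := by ring
    linarith

lemma swap_bound (w : ℕ → ℝ) (hw : ∀ j, 0 ≤ w j) (N : ℕ) :
    ∑ l ∈ Finset.range N, (2:ℝ)^l * (∑ j ∈ Finset.range (N-l), w j * 2^j)
      ≤ 2^N * ∑ j ∈ Finset.range N, w j := by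
  have step1 : ∀ l ∈ Finset.range N, (2:ℝ)^l * (∑ j ∈ Finset.range (N-l), w j * 2^j)
      = ∑ j ∈ Finset.range N, (if j + l < N then w j * 2^(j+l) else 0) := by
    intro l hl
    have hfil : (Finset.range N).filter (fun j => j + l < N) = Finset.range (N - l) := by
      ext j; simp only [Finset.mem_filter, Finset.mem_range]; omega
    rw [← Finset.sum_filter, hfil, Finset.mul_sum]
    refine Finset.sum_congr rfl fun j hj => ?_
    rw [pow_add]; ring
  rw [Finset.sum_congr rfl step1, Finset.sum_comm, Finset.mul_sum]
  refine Finset.sum_le_sum fun j hj => ?_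
  have hfil : (Finset.range N).filter (fun l => j + l < N) = Finset.range (N - j) := by
    ext l; simp only [Finset.mem_filter, Finset.mem_range]; omega
  rw [← Finset.sum_filter, hfil]
  have hpull : ∑ l ∈ Finset.range (N-j), w j * 2^(j+l)
      = w j * 2^j * ∑ l ∈ Finset.range (N-j), (2:ℝ)^l := by
    rw [Finset.mul_sum]
    refine Finset.sum_congr rfl fun l _ => by rw [pow_add]; ring
  rw [hpull]
  have hj' : j < N := Finset.mem_range.1 hj
  calc w j * 2^j * ∑ l ∈ Finset.range (N-j), (2:ℝ)^l
      ≤ w j * 2^j * 2^(N-j) := by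
        refine mul_le_mul_of_nonneg_left (sum_pow2_real _) ?_
        have := hw j
        positivity
    _ = 2^N * w j := by
        rw [mul_assoc, ← pow_add, show j + (N-j) = N by omega]
        ring

lemma dlt_sum_le (m N : ℕ) : ∑ j ∈ Finset.range N, dlt m j ≤ V m := by
  rcases Nat.eq_zero_or_pos N with hN | hN
  · subst hN; simp [V]
  obtain ⟨K, rfl⟩ : ∃ K, N = K + 1 := ⟨N - 1, by omega⟩
  rw [Finset.sum_range_succ']
  have hd0 : dlt m 0 = bit m 0 := by simp [dlt]
  set c : ℕ → ℕ := fun k => if m.testBit (k+1) ≠ m.testBit k then 1 else 0 with hc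
  have hdc : ∀ i, dlt m (i+1) = c i := by
    intro i
    simp only [dlt, hc, Nat.add_sub_cancel]
    norm_num
  have hzero : ∀ i, m ≤ i → c i = 0 := by
    intro i hi
    have h1 : m < 2^i := lt_of_le_of_lt hi (Nat.lt_two_pow_self)
    have h2 : m < 2^(i+1) := lt_trans h1 (Nat.pow_lt_pow_right one_lt_two i.lt_succ_self)
    simp [hc, Nat.testBit_lt_two_pow h1, Nat.testBit_lt_two_pow h2]
  have hstep : ∑ i ∈ Finset.range K, dlt m (i+1) ≤ ∑ i ∈ Finset.range m, c i := by
    rw [Finset.sum_congr rfl fun i _ => hdc i]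
    calc ∑ i ∈ Finset.range K, c i ≤ ∑ i ∈ Finset.range (max K m), c i :=
        Finset.sum_le_sum_of_subset (Finset.range_subset_range.2 (le_max_left _ _))
      _ = ∑ i ∈ Finset.range m, c i := by
        refine (Finset.sum_subset (Finset.range_subset_range.2 (le_max_right _ _)) ?_).symm
        intro i _ hi
        exact hzero i (by simpa using hi)
  have hV : V m = bit m 0 + ∑ i ∈ Finset.range m, c i := rfl
  rw [hV, hd0]
  omega

lemma ee_sum_le (n m N : ℕ) :
    ∑ j ∈ Finset.range N, dlt n j * (1 - dlt m j) ≤ (Tset N n m).card + 1 := by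
  rcases Nat.eq_zero_or_pos N with hN | hN
  · subst hN; simp
  obtain ⟨K, rfl⟩ : ∃ K, N = K + 1 := ⟨N - 1, by omega⟩
  rw [Finset.sum_range_succ']
  have he0 : dlt n 0 * (1 - dlt m 0) ≤ 1 := by
    rcases Nat.le_one_iff_eq_zero_or_eq_one.mp (dlt_le_one n 0) with h | h <;>
      rcases Nat.le_one_iff_eq_zero_or_eq_one.mp (dlt_le_one m 0) with h' | h' <;>
      simp [h, h']
  have hmain : ∑ i ∈ Finset.range K, dlt n (i+1) * (1 - dlt m (i+1))
      ≤ (Tset (K+1) n m).card := by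
    set e : ℕ → ℕ := fun i => dlt n (i+1) * (1 - dlt m (i+1)) with he
    have he1 : ∀ i, e i ≤ 1 := by
      intro i
      simp only [he]
      rcases Nat.le_one_iff_eq_zero_or_eq_one.mp (dlt_le_one n (i+1)) with h | h <;>
        rcases Nat.le_one_iff_eq_zero_or_eq_one.mp (dlt_le_one m (i+1)) with h' | h' <;>
        simp [h, h']
    have hmem : ∀ i ∈ (Finset.range K).filter (fun i => e i = 1),
        i + 1 ∈ Tset (K+1) n m := by
      intro i hi
      obtain ⟨hiK, hie⟩ := Finset.mem_filter.1 hi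
      have hiK' : i < K := Finset.mem_range.1 hiK
      rw [he] at hie
      simp only at hie
      have hdn1 : dlt n (i+1) = 1 := by
        rcases Nat.le_one_iff_eq_zero_or_eq_one.mp (dlt_le_one n (i+1)) with h | h
        · rw [h] at hie; simp at hie
        · exact h
      have hdm0 : dlt m (i+1) = 0 := by
        rcases Nat.le_one_iff_eq_zero_or_eq_one.mp (dlt_le_one m (i+1)) with h | h
        · exact h
        · rw [h] at hie; simp at hie
      unfold Tset
      rw [Finset.mem_filter]
      refine ⟨Finset.mem_Icc.2 ⟨by omega, by omega⟩, ?_, ?_⟩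
      · simp only [Nat.add_sub_cancel]
        intro hcon
        unfold dlt at hdn1
        rw [if_neg (Nat.succ_ne_zero i)] at hdn1
        simp only [Nat.add_sub_cancel] at hdn1
        rw [if_neg (not_not_intro hcon)] at hdn1
        exact absurd hdn1 (by norm_num)
      · simp only [Nat.add_sub_cancel]
        by_contra hcon
        unfold dlt at hdm0
        rw [if_neg (Nat.succ_ne_zero i)] at hdm0
        simp only [Nat.add_sub_cancel] at hdm0
        rw [if_pos hcon] at hdm0
        exact absurd hdm0 (by norm_num)
    calc ∑ i ∈ Finset.range K, e i
        = ∑ i ∈ (Finset.range K).filter (fun i => e i = 1), e i := by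
          refine (Finset.sum_filter_of_ne ?_).symm
          intro i _ hne
          have := he1 i
          omega
      _ ≤ ∑ i ∈ (Finset.range K).filter (fun i => e i = 1), 1 :=
          Finset.sum_le_sum fun i hi => he1 i
      _ = ((Finset.range K).filter (fun i => e i = 1)).card := by
          rw [Finset.sum_const, smul_eq_mul, mul_one]
      _ ≤ (Tset (K+1) n m).card := by
          refine Finset.card_le_card_of_injOn (fun i => i + 1) hmem ?_
          intro a _ b _ hab
          simp only at hab
          omega
  omega

end Aux

/-- Upper bound: `L_n^{(t)} ≤ 2V(m) + |T(n,m)| + 2`. -/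
theorem Leb_upper (t : ℝ) (ht : t ∈ Set.Ico (0:ℝ) 1) (N n : ℕ)
    (h1 : 2^N ≤ n) (h2 : n < 2^(N+1)) :
    Leb t N n ≤
      2 * (V (mOf t N) : ℝ) + ((Tset N n (mOf t N)).card : ℝ) + 2 := by
  classical
  have hval : ∀ j i : ℕ, i < N+1 → ((toG ((j:ℝ)/2^(N+1))) i).val = bit j (N - i) := by
    intro j i hi
    have h := toG_val (M := N+1) (j := j) (i := i) hi
    rwa [show N+1-1-i = N-i by omega] at h
  set m := mOf t N with hm
  set F : ℕ → ℝ := fun j => |Dconj t N n (toG ((j:ℝ)/2^(N+1)))| with hF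
  set w : ℕ → ℝ := fun j => (wgt n m j : ℝ) with hw
  set W : ℕ → ℝ := fun l => ∑ j ∈ Finset.range (N-l), w j * 2^j with hWdef
  set Sw : ℝ := ∑ j ∈ Finset.range N, w j with hSw
  have hw0 : ∀ j, 0 ≤ w j := fun j => by rw [hw]; positivity
  -- pair bound for q ≥ 1
  have pairq : ∀ l ∈ Finset.range N, ∀ q ∈ Finset.Ico (2^l) (2^(l+1)),
      F (2*q) + F (2*q+1) ≤ 2 * W l := by
    intro l hl q hq
    obtain ⟨hq1, hq2⟩ := Finset.mem_Ico.1 hq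
    have hlN : l < N := Finset.mem_range.1 hl
    have hsN : N-1-l < N := by omega
    have hpow2 : (2:ℕ)^(l+2) = 2*2^(l+1) := by ring
    have hpow1 : (2:ℕ)^(l+1) = 2*2^l := by ring
    have hq2e : 2*q < 2^(l+2) := by omega
    have hq1e : 2^(l+1) ≤ 2*q := by omega
    have hq2o : 2*q+1 < 2^(l+2) := by omega
    have hq1o : 2^(l+1) ≤ 2*q+1 := by omega
    set x : G := toG (((2*q : ℕ):ℝ)/2^(N+1)) with hx
    set y : G := toG (((2*q+1 : ℕ):ℝ)/2^(N+1)) with hy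
    have hx0 : ∀ i < N-1-l, (x i).val = 0 := by
      intro i hi
      rw [hx, hval (2*q) i (by omega)]
      exact bit_eq_zero_of_lt' hq2e (by omega)
    have hxs : (x (N-1-l)).val = 1 := by
      rw [hx, hval (2*q) (N-1-l) (by omega), show N-(N-1-l) = l+1 by omega]
      exact bit_top hq1e hq2e
    have hy0 : ∀ i < N-1-l, (y i).val = 0 := by
      intro i hi
      rw [hy, hval (2*q+1) i (by omega)]
      exact bit_eq_zero_of_lt' hq2o (by omega)
    have hys : (y (N-1-l)).val = 1 := by
      rw [hy, hval (2*q+1) (N-1-l) (by omega), show N-(N-1-l) = l+1 by omega]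
      exact bit_top hq1o hq2o
    have hagree : ∀ i < N, (x i).val = (y i).val := by
      intro i hi
      rw [hx, hy, hval (2*q) i (by omega), hval (2*q+1) i (by omega),
        bit_double_even q (N-i) (by omega), bit_double_odd q (N-i) (by omega)]
    have hxN : (x N).val = 0 := by
      rw [hx, hval (2*q) N (by omega), Nat.sub_self, bit_eq_div_mod]
      simp only [pow_zero, Nat.div_one]
      omega
    have hyN : (y N).val = 1 := by
      rw [hy, hval (2*q+1) N (by omega), Nat.sub_self, bit_eq_div_mod]
      simp only [pow_zero, Nat.div_one]
      omega
    have hpb := pair_bound t N n h1 h2 hsN x y hx0 hxs hy0 hys hagree hxN hyN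
    rw [← hm, show N-1-l+1 = N-l by omega] at hpb
    have hFx : F (2*q) = |Dconj t N n x| := by rw [hF, hx]
    have hFy : F (2*q+1) = |Dconj t N n y| := by rw [hF, hy]
    rw [hFx, hFy, hWdef]
    exact hpb
  -- endpoint pair
  have hq01 : F (2*0) + F (2*0+1) ≤ 2 * 2^N := by
    set x : G := toG (((2*0 : ℕ):ℝ)/2^(N+1)) with hx
    set y : G := toG (((2*0+1 : ℕ):ℝ)/2^(N+1)) with hy
    have hxall : ∀ i < N+1, (x i).val = 0 := by
      intro i hi
      rw [hx, hval (2*0) i hi]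
      simp [bit]
    have hy0 : ∀ i < N, (y i).val = 0 := by
      intro i hi
      rw [hy, hval (2*0+1) i (by omega)]
      refine bit_eq_zero_of_lt' (show 2*0+1 < 2^1 by norm_num) (by omega)
    have hyN : (y N).val = 1 := by
      rw [hy, hval (2*0+1) N (by omega), Nat.sub_self, bit_eq_div_mod]
      simp
    have := pair01_bound t N n h1 h2 x y hxall hy0 hyN
    rw [hF]
    exact this
  -- sum manipulations
  have hS : ∑ j ∈ Finset.range (2^(N+1)), F j ≤ 2*2^N + 2 * (2^N * Sw) := by
    rw [show (2:ℕ)^(N+1) = 2*2^N by ring, sum_pairs (2^N) F, Finset.range_eq_Ico,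
      Finset.sum_eq_sum_Ico_succ_bot (Nat.pow_pos (by norm_num))]
    have htail : ∑ q ∈ Finset.Ico 1 (2^N), (F (2*q) + F (2*q+1)) ≤ 2 * (2^N * Sw) := by
      rw [sum_Ico_pow2 (fun q => F (2*q) + F (2*q+1)) N]
      have hinner : ∀ l ∈ Finset.range N,
          ∑ q ∈ Finset.Ico (2^l) (2^(l+1)), (F (2*q) + F (2*q+1))
            ≤ (2:ℝ)^l * (2 * W l) := by
        intro l hl
        calc ∑ q ∈ Finset.Ico (2^l) (2^(l+1)), (F (2*q) + F (2*q+1))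
            ≤ (Finset.Ico (2^l) (2^(l+1))).card • (2 * W l) :=
              Finset.sum_le_card_nsmul _ _ _ (fun q hq => pairq l hl q hq)
          _ = (2:ℝ)^l * (2 * W l) := by
              rw [Nat.card_Ico, nsmul_eq_mul]
              have hc : (2:ℕ)^(l+1) - 2^l = 2^l := by
                generalize hK : (2:ℕ)^l = K
                have h : (2:ℕ)^(l+1) = K + K := by rw [← hK]; ring
                omega
              rw [hc]
              push_cast
              ring
      calc ∑ l ∈ Finset.range N, ∑ q ∈ Finset.Ico (2^l) (2^(l+1)), (F (2*q) + F (2*q+1))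
          ≤ ∑ l ∈ Finset.range N, (2:ℝ)^l * (2 * W l) := Finset.sum_le_sum hinner
        _ = 2 * ∑ l ∈ Finset.range N, (2:ℝ)^l * W l := by
            rw [Finset.mul_sum]
            exact Finset.sum_congr rfl fun l _ => by ring
        _ ≤ 2 * (2^N * Sw) := by
            have hsb := swap_bound w hw0 N
            simp only [hWdef, hSw]
            linarith [hsb]
    linarith [hq01, htail]
  -- counting bound
  have hSwb : Sw ≤ 2*(V m : ℝ) + ((Tset N n m).card : ℝ) + 1 := by
    have hnat : ∑ j ∈ Finset.range N, wgt n m j ≤ 2 * V m + (Tset N n m).card + 1 := by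
      unfold wgt
      rw [Finset.sum_add_distrib]
      have ha := dlt_sum_le m N
      have hb := ee_sum_le n m N
      have hmul : ∑ j ∈ Finset.range N, 2 * dlt m j
          = 2 * ∑ j ∈ Finset.range N, dlt m j := by rw [Finset.mul_sum]
      omega
    rw [hSw, hw]
    push_cast
    exact_mod_cast hnat
  -- final
  rw [Leb_eq_sum t N n h2]
  have hpos : (0:ℝ) < 2^(N+1) := by positivity
  have hstep : (2^(N+1):ℝ)⁻¹ * ∑ j ∈ Finset.range (2^(N+1)), F j
      ≤ (2^(N+1):ℝ)⁻¹ * (2*2^N + 2 * (2^N * Sw)) := by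
    apply mul_le_mul_of_nonneg_left hS
    positivity
  have heq : (2^(N+1):ℝ)⁻¹ * (2*2^N + 2 * (2^N * Sw)) = 1 + Sw := by
    have h2N1 : (2:ℝ)^(N+1) = 2*2^N := by ring
    rw [h2N1]
    field_simp
  calc (2^(N+1):ℝ)⁻¹ * ∑ j ∈ Finset.range (2^(N+1)), F j
      ≤ 1 + Sw := by rw [← heq]; exact hstep
    _ ≤ 2 * (V m : ℝ) + ((Tset N n m).card : ℝ) + 2 := by linarith [hSwb]
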